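/- arXiv:2004.02036 — 2 statements merged into one kernel-verified Lean document; each statement's English description precedes it below -/
import Mathlib

section
/- Schur's bound: for an m×m complex matrix A with entries a_{ij}, the square of every singular value of A is at most max_{i,j} r_i c_j, where r_i = Σ_k |a_{ik}| is the i-th absolute row sum and c_j = Σ_k |a_{kj}| is the j-th absolute column sum. -/
set_option maxHeartbeats 1000000

open scoped Matrix.Norms.L2Operator

private theorem schur_bound_key (m : ℕ) (A : Matrix (Fin m) (Fin m) ℂ) (R C : ℝ)
    (hR : ∀ i, ∑ k, ‖A i k‖ ≤ R)
    (hC : ∀ j, ∑ k, ‖A k j‖ ≤ C)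
    (hR0 : 0 ≤ R)
    (x : Fin m → ℂ) :
    ∑ i, ‖(A.mulVec x) i‖ ^ 2 ≤ R * C * ∑ j, ‖x j‖ ^ 2 := by
  have step1 : ∀ i, ‖(A.mulVec x) i‖ ^ 2 ≤
      (∑ j, ‖A i j‖) * (∑ j, ‖A i j‖ * ‖x j‖ ^ 2) := by
    intro i
    have h1 : ‖(A.mulVec x) i‖ ≤ ∑ j, ‖A i j‖ * ‖x j‖ := by
      have e : A.mulVec x i = ∑ j, A i j * x j := rfl
      rw [e]
      refine le_trans (norm_sum_le _ _) (le_of_eq ?_)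
      simp [norm_mul]
    calc ‖(A.mulVec x) i‖ ^ 2
        ≤ (∑ j, ‖A i j‖ * ‖x j‖) ^ 2 := by
          apply pow_le_pow_left₀ (norm_nonneg _) h1
      _ ≤ (∑ j, ‖A i j‖) * (∑ j, ‖A i j‖ * ‖x j‖ ^ 2) :=
          Finset.sum_sq_le_sum_mul_sum_of_sq_eq_mul _ (fun j _ => by positivity)
            (fun j _ => by positivity) (fun j _ => by ring)
  calc ∑ i, ‖(A.mulVec x) i‖ ^ 2
      ≤ ∑ i, (∑ j, ‖A i j‖) * (∑ j, ‖A i j‖ * ‖x j‖ ^ 2) :=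
        Finset.sum_le_sum fun i _ => step1 i
    _ ≤ ∑ i, R * (∑ j, ‖A i j‖ * ‖x j‖ ^ 2) :=
        Finset.sum_le_sum fun i _ => mul_le_mul_of_nonneg_right (hR i)
          (Finset.sum_nonneg fun j _ => by positivity)
    _ = R * ∑ j, (∑ i, ‖A i j‖) * ‖x j‖ ^ 2 := by
        rw [← Finset.mul_sum, Finset.sum_comm]
        simp_rw [Finset.sum_mul]
    _ ≤ R * ∑ j, C * ‖x j‖ ^ 2 := by
        refine mul_le_mul_of_nonneg_left (Finset.sum_le_sum fun j _ => ?_) hR0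
        exact mul_le_mul_of_nonneg_right (hC j) (by positivity)
    _ = R * C * ∑ j, ‖x j‖ ^ 2 := by rw [← Finset.mul_sum]; ring


/-- Schur's bound: the square of every singular value of `A` (equivalently, the square of the
`ℓ² → ℓ²` operator norm of `A`) is at most `max_{i,j} r_i * c_j`, where `r_i` is the `i`-th
absolute row sum and `c_j` is the `j`-th absolute column sum. -/
theorem schur_bound (m : ℕ) (A : Matrix (Fin m) (Fin m) ℂ) :
    ‖A‖ ^ 2 ≤ ⨆ i : Fin m, ⨆ j : Fin m,
      (∑ k, ‖A i k‖) * (∑ k, ‖A k j‖) := by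
  rcases Nat.eq_zero_or_pos m with hm | hm
  · subst hm
    have hA : A = 0 := Subsingleton.elim _ _
    rw [hA, norm_zero, Real.iSup_of_isEmpty]
    norm_num
  · haveI : Nonempty (Fin m) := Fin.pos_iff_nonempty.mp hm
    set r : Fin m → ℝ := fun i => ∑ k, ‖A i k‖ with hr
    set c : Fin m → ℝ := fun j => ∑ k, ‖A k j‖ with hc
    obtain ⟨i0, hi0⟩ := Finite.exists_max r
    obtain ⟨j0, hj0⟩ := Finite.exists_max c
    have hr0 : 0 ≤ r i0 := Finset.sum_nonneg fun k _ => norm_nonneg _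
    have hc0 : 0 ≤ c j0 := Finset.sum_nonneg fun k _ => norm_nonneg _
    have hRC : 0 ≤ r i0 * c j0 := mul_nonneg hr0 hc0
    have hnorm : ‖A‖ ≤ Real.sqrt (r i0 * c j0) := by
      rw [Matrix.l2_opNorm_def]
      refine ContinuousLinearMap.opNorm_le_bound _ (Real.sqrt_nonneg _) fun x => ?_
      show ‖Matrix.toEuclideanLin (𝕜 := ℂ) A x‖ ≤ _
      set y : EuclideanSpace ℂ (Fin m) := Matrix.toEuclideanLin (𝕜 := ℂ) A x with hy
      have hyi : ∀ i, y i = A.mulVec (fun j => x j) i := fun i => by rw [hy]; rfl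
      have hsq : ‖y‖ ^ 2 ≤ (r i0 * c j0) * ‖x‖ ^ 2 := by
        rw [EuclideanSpace.norm_eq, EuclideanSpace.norm_eq,
          Real.sq_sqrt (Finset.sum_nonneg fun i _ => sq_nonneg _),
          Real.sq_sqrt (Finset.sum_nonneg fun i _ => sq_nonneg _)]
        simp only [hyi]
        exact schur_bound_key m A (r i0) (c j0) hi0 hj0 hr0 (fun j => x j)
      calc ‖y‖ = Real.sqrt (‖y‖ ^ 2) := (Real.sqrt_sq (norm_nonneg _)).symm
        _ ≤ Real.sqrt ((r i0 * c j0) * ‖x‖ ^ 2) := Real.sqrt_le_sqrt hsq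
        _ = Real.sqrt (r i0 * c j0) * ‖x‖ := by
            rw [Real.sqrt_mul hRC, Real.sqrt_sq (norm_nonneg _)]
    have hA2 : ‖A‖ ^ 2 ≤ r i0 * c j0 := by
      calc ‖A‖ ^ 2 ≤ Real.sqrt (r i0 * c j0) ^ 2 :=
            pow_le_pow_left₀ (norm_nonneg _) hnorm 2
        _ = r i0 * c j0 := Real.sq_sqrt hRC
    refine hA2.trans ?_
    refine le_ciSup_of_le (Finite.bddAbove_range _) i0 ?_
    exact le_ciSup_of_le (Finite.bddAbove_range _) j0 le_rfl
end

section
/- Fourier slice theorem: if F : ℝ² → ℂ is integrable and f(ρ,θ) = ∫_ℝ F(ρ cos θ − s sin θ, ρ sin θ + s cos θ) ds is its Radon transform, then the 1D Fourier transform of f in the ρ variable at frequency k equals the 2D Fourier transform of F evaluated at (k cos θ, k sin θ): ∫_ℝ f(ρ,θ) e^{−2πiρk} dρ = ∫_{ℝ²} F(x,y) e^{−2πi(x k cos θ + y k sin θ)} dx dy. -/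
open Real MeasureTheory

/-- Fourier slice theorem: the 1D Fourier transform (in the offset variable `ρ`) of the Radon
transform of an integrable `F : ℝ² → ℂ` at angle `θ` and frequency `k` equals the 2D Fourier
transform of `F` evaluated at `(k cos θ, k sin θ)`. -/
theorem fourier_slice (F : ℝ × ℝ → ℂ) (hF : Integrable F) (θ k : ℝ) :
    (∫ ρ : ℝ, (∫ s : ℝ, F (ρ * cos θ - s * sin θ, ρ * sin θ + s * cos θ)) *
        Complex.exp (((-2 * π * ρ * k : ℝ) : ℂ) * Complex.I))
      = ∫ p : ℝ × ℝ, F p *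
          Complex.exp (((-2 * π * (p.1 * (k * cos θ) + p.2 * (k * sin θ)) : ℝ) : ℂ) *
            Complex.I) := by
  -- the rotation by θ on ℂ, transported to ℝ × ℝ
  set rot : ℂ ≃ₗᵢ[ℝ] ℂ := rotation (Circle.exp θ)
  set T : (ℝ × ℝ) ≃ᵐ (ℝ × ℝ) :=
    (Complex.measurableEquivRealProd.symm.trans
      rot.toHomeomorph.toMeasurableEquiv).trans Complex.measurableEquivRealProd
  have h1 : MeasurePreserving Complex.measurableEquivRealProd.symm volume volume :=
    Complex.volume_preserving_equiv_real_prod.symm _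
  have hT : MeasurePreserving T volume volume :=
    (Complex.volume_preserving_equiv_real_prod.comp rot.measurePreserving).comp h1
  have hTapp : ∀ ρ s : ℝ, T (ρ, s) = (ρ * cos θ - s * sin θ, ρ * sin θ + s * cos θ) := by
    intro ρ s
    show Complex.measurableEquivRealProd (rot (Complex.measurableEquivRealProd.symm (ρ, s)))
      = _
    simp only [Complex.measurableEquivRealProd, Homeomorph.toMeasurableEquiv_coe,
      Complex.equivRealProdCLM]
    show Complex.equivRealProd (rot (Complex.equivRealProd.symm (ρ, s))) = _
    have : rot (Complex.equivRealProd.symm (ρ, s))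
        = (Circle.exp θ : ℂ) * (Complex.equivRealProd.symm (ρ, s)) := rfl
    rw [this]
    simp [Complex.equivRealProd, Circle.coe_exp, Complex.exp_mul_I, Complex.ext_iff,
      Complex.add_re, Complex.add_im, Complex.mul_re, Complex.mul_im,
      Complex.cos_ofReal_re, Complex.sin_ofReal_re]
    constructor <;> ring
  -- the 2D integrand
  set G : ℝ × ℝ → ℂ := fun p => F p *
    Complex.exp (((-2 * π * (p.1 * (k * cos θ) + p.2 * (k * sin θ)) : ℝ) : ℂ) * Complex.I)
  have hGmeas : AEStronglyMeasurable
      (fun p : ℝ × ℝ => Complex.exp (((-2 * π * (p.1 * (k * cos θ) + p.2 * (k * sin θ)) : ℝ) : ℂ)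
        * Complex.I)) volume := by
    apply Continuous.aestronglyMeasurable
    fun_prop
  have hG : Integrable G := by
    have := hF.bdd_mul (c := 1) hGmeas (Filter.Eventually.of_forall fun p => (Complex.norm_exp_ofReal_mul_I _).le)
    exact this.congr (by filter_upwards with p using mul_comm _ _)
  have hGT : Integrable (fun q : ℝ × ℝ => G (T q)) := (hT.integrable_comp_emb T.measurableEmbedding).mpr hG
  have key : ∀ ρ s : ℝ, G (T (ρ, s))
      = F (ρ * cos θ - s * sin θ, ρ * sin θ + s * cos θ)
        * Complex.exp (((-2 * π * ρ * k : ℝ) : ℂ) * Complex.I) := by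
    intro ρ s
    rw [hTapp]
    simp only [G]
    congr 2
    have h2 : Complex.sin θ ^ 2 + Complex.cos θ ^ 2 = 1 := Complex.sin_sq_add_cos_sq θ
    push_cast
    linear_combination (-(2 * (π : ℂ) * ρ * k * Complex.I)) * h2
  calc (∫ ρ : ℝ, (∫ s : ℝ, F (ρ * cos θ - s * sin θ, ρ * sin θ + s * cos θ)) *
        Complex.exp (((-2 * π * ρ * k : ℝ) : ℂ) * Complex.I))
      = ∫ ρ : ℝ, ∫ s : ℝ, G (T (ρ, s)) := by
        congr 1; ext ρ
        rw [← integral_mul_const]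
        congr 1; ext s
        rw [key]
    _ = ∫ q : ℝ × ℝ, G (T q) := by
        rw [Measure.volume_eq_prod] at hGT ⊢
        exact (integral_integral hGT)
    _ = ∫ p : ℝ × ℝ, G p := hT.integral_comp T.measurableEmbedding G
end
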